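/- Let D = {1, 3, 4, 5, 9} ⊆ ℤ/11ℤ (the set of nonzero quadratic residues modulo 11). In the group algebra 𝔽₂[D₂₂] of the dihedral group of order 22, let u = 1 + Σ_{j∈D} (sr j). Then u² = 0 and the minimum distance of the code generated by u equals 6. -/

import Mathlib

noncomputable section

open MonoidAlgebra

/-- The code generated by `u` in a group algebra: the `R`-span of `{g • u : g ∈ G}`. -/
def codeGen {R : Type*} [CommSemiring R] {G : Type*} [Monoid G]
    (u : MonoidAlgebra R G) : Submodule R (MonoidAlgebra R G) :=
  Submodule.span R (Set.range fun g : G => MonoidAlgebra.of R G g * u)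

/-- The weight (support size) of an element of a group algebra. -/
def wt {R : Type*} [Semiring R] {G : Type*} (x : MonoidAlgebra R G) : ℕ :=
  x.coeff.support.card

/-- The minimum distance of the code generated by `u`: the least weight of a nonzero
element of the code. -/
def minDist {R : Type*} [CommSemiring R] {G : Type*} [Monoid G]
    (u : MonoidAlgebra R G) : ℕ :=
  sInf {n | ∃ x ∈ codeGen u, x ≠ 0 ∧ wt x = n}

/-- The set of nonzero quadratic residues modulo 11. -/
def D : Finset (ZMod 11) := {1,3,4,5,9}

/-- `u = 1 + ∑_{j ∈ D} sr j` in the group algebra of the dihedral group of order 22. -/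
def uu : MonoidAlgebra (ZMod 2) (DihedralGroup 11) :=
  1 + ∑ j ∈ D, MonoidAlgebra.of (ZMod 2) (DihedralGroup 11) (DihedralGroup.sr j)


section Aux
set_option maxRecDepth 100000
set_option maxHeartbeats 1000000

open DihedralGroup

/-- Explicit codeword attached to a coefficient vector. -/
def wrd (c0 c1 c2 c3 c4 c5 c6 c7 c8 c9 c10 : ZMod 2) : DihedralGroup 11 → ZMod 2 := fun x =>
  match x with
  | .r k => if k = 0 then c0 else if k = 1 then c1 else if k = 2 then c2 else if k = 3 then c3 else if k = 4 then c4 else if k = 5 then c5 else if k = 6 then c6 else if k = 7 then c7 else if k = 8 then c8 else if k = 9 then c9 else c10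
  | .sr k => if k = 0 then c1+c3+c4+c5+c9 else if k = 1 then c0+c2+c3+c4+c8 else if k = 2 then c10+c1+c2+c3+c7 else if k = 3 then c9+c0+c1+c2+c6 else if k = 4 then c8+c10+c0+c1+c5 else if k = 5 then c7+c9+c10+c0+c4 else if k = 6 then c6+c8+c9+c10+c3 else if k = 7 then c5+c7+c8+c9+c2 else if k = 8 then c4+c6+c7+c8+c1 else if k = 9 then c3+c5+c6+c7+c0 else c2+c4+c5+c6+c10

def listG : List (DihedralGroup 11) :=
  [.r 0, .r 1, .r 2, .r 3, .r 4, .r 5, .r 6, .r 7, .r 8, .r 9, .r 10,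
   .sr 0, .sr 1, .sr 2, .sr 3, .sr 4, .sr 5, .sr 6, .sr 7, .sr 8, .sr 9, .sr 10]

def cnt (y : DihedralGroup 11 → ZMod 2) : ℕ := listG.countP (fun g => decide (y g ≠ 0))

theorem key : ∀ c0 c1 c2 c3 c4 c5 c6 c7 c8 c9 c10 : ZMod 2, cnt (wrd c0 c1 c2 c3 c4 c5 c6 c7 c8 c9 c10) = 0 ∨ 6 ≤ cnt (wrd c0 c1 c2 c3 c4 c5 c6 c7 c8 c9 c10) := by decide

def gfun (g : DihedralGroup 11) : DihedralGroup 11 → ZMod 2 := fun x =>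
  (if g = x then 1 else 0) + ∑ j ∈ D, (if g * DihedralGroup.sr j = x then 1 else 0)

theorem coe_gen (g : DihedralGroup 11) :
    ⇑(MonoidAlgebra.of (ZMod 2) (DihedralGroup 11) g * uu).coeff = gfun g := by
  funext x
  rw [uu, mul_add, mul_one, Finset.mul_sum]
  simp only [← map_mul]
  rw [MonoidAlgebra.coeff_add, Finsupp.add_apply, MonoidAlgebra.coeff_sum, Finsupp.finset_sum_apply]
  simp only [MonoidAlgebra.of_apply, MonoidAlgebra.coeff_single, Finsupp.single_apply, gfun]

theorem genr : ∀ i : ZMod 11, gfun (.r i) = wrd (if i = 0 then 1 else 0) (if i = 1 then 1 else 0) (if i = 2 then 1 else 0) (if i = 3 then 1 else 0) (if i = 4 then 1 else 0) (if i = 5 then 1 else 0) (if i = 6 then 1 else 0) (if i = 7 then 1 else 0) (if i = 8 then 1 else 0) (if i = 9 then 1 else 0) (if i = 10 then 1 else 0) := by decide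

theorem gens : ∀ i : ZMod 11, gfun (.sr i) = wrd (if (0 : ZMod 11) + i ∈ D then 1 else 0) (if (1 : ZMod 11) + i ∈ D then 1 else 0) (if (2 : ZMod 11) + i ∈ D then 1 else 0) (if (3 : ZMod 11) + i ∈ D then 1 else 0) (if (4 : ZMod 11) + i ∈ D then 1 else 0) (if (5 : ZMod 11) + i ∈ D then 1 else 0) (if (6 : ZMod 11) + i ∈ D then 1 else 0) (if (7 : ZMod 11) + i ∈ D then 1 else 0) (if (8 : ZMod 11) + i ∈ D then 1 else 0) (if (9 : ZMod 11) + i ∈ D then 1 else 0) (if (10 : ZMod 11) + i ∈ D then 1 else 0) := by decide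

theorem wt_glue (x : MonoidAlgebra (ZMod 2) (DihedralGroup 11)) :
    wt x = cnt ⇑x.coeff := by
  have hmem : ∀ g : DihedralGroup 11, g ∈ listG := by decide
  have hnd : listG.Nodup := by decide
  have h1 : x.coeff.support
      = (listG.filter (fun g => decide (x.coeff g ≠ 0))).toFinset := by
    ext g
    simp [List.mem_filter, Finsupp.mem_support_iff, hmem g]
  rw [wt, h1, List.toFinset_card_of_nodup (hnd.filter _), cnt, List.countP_eq_length_filter]

theorem wrd_add (c0 c1 c2 c3 c4 c5 c6 c7 c8 c9 c10 d0 d1 d2 d3 d4 d5 d6 d7 d8 d9 d10 : ZMod 2) :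
    (wrd c0 c1 c2 c3 c4 c5 c6 c7 c8 c9 c10) + (wrd d0 d1 d2 d3 d4 d5 d6 d7 d8 d9 d10) = wrd (c0+d0) (c1+d1) (c2+d2) (c3+d3) (c4+d4) (c5+d5) (c6+d6) (c7+d7) (c8+d8) (c9+d9) (c10+d10) := by
  funext x
  rcases x with k | k <;> simp only  [wrd, Pi.add_apply, ite_add_ite] <;> ring_nf

theorem wrd_zero : wrd 0 0 0 0 0 0 0 0 0 0 0 = 0 := by decide

/-- The explicit submodule containing the code. -/
noncomputable def W : Submodule (ZMod 2) (MonoidAlgebra (ZMod 2) (DihedralGroup 11)) where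
  carrier := {x | ∃ c0 c1 c2 c3 c4 c5 c6 c7 c8 c9 c10 : ZMod 2, ⇑x.coeff = wrd c0 c1 c2 c3 c4 c5 c6 c7 c8 c9 c10}
  add_mem' := by
    rintro a b ⟨c0, c1, c2, c3, c4, c5, c6, c7, c8, c9, c10, ha⟩ ⟨d0, d1, d2, d3, d4, d5, d6, d7, d8, d9, d10, hb⟩
    exact ⟨c0+d0, c1+d1, c2+d2, c3+d3, c4+d4, c5+d5, c6+d6, c7+d7, c8+d8, c9+d9, c10+d10, by rw [MonoidAlgebra.coeff_add, Finsupp.coe_add, ha, hb, wrd_add]⟩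
  zero_mem' := ⟨0,0,0,0,0,0,0,0,0,0,0, by rw [MonoidAlgebra.coeff_zero, Finsupp.coe_zero, wrd_zero]⟩
  smul_mem' := by
    rintro r x ⟨c0, c1, c2, c3, c4, c5, c6, c7, c8, c9, c10, h⟩
    have hr : r = 0 ∨ r = 1 := (by decide : ∀ t : ZMod 2, t = 0 ∨ t = 1) r
    rcases hr with rfl | rfl
    · exact ⟨0,0,0,0,0,0,0,0,0,0,0, by rw [zero_smul, MonoidAlgebra.coeff_zero, Finsupp.coe_zero, wrd_zero]⟩
    · exact ⟨c0, c1, c2, c3, c4, c5, c6, c7, c8, c9, c10, by rwa [one_smul]⟩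

theorem code_le_W : codeGen uu ≤ W := by
  rw [codeGen, Submodule.span_le]
  rintro _ ⟨g, rfl⟩
  rcases g with i | i
  · exact ⟨if i = 0 then 1 else 0, if i = 1 then 1 else 0, if i = 2 then 1 else 0, if i = 3 then 1 else 0, if i = 4 then 1 else 0, if i = 5 then 1 else 0, if i = 6 then 1 else 0, if i = 7 then 1 else 0, if i = 8 then 1 else 0, if i = 9 then 1 else 0, if i = 10 then 1 else 0, by rw [coe_gen]; exact genr i⟩
  · exact ⟨if (0 : ZMod 11) + i ∈ D then 1 else 0, if (1 : ZMod 11) + i ∈ D then 1 else 0, if (2 : ZMod 11) + i ∈ D then 1 else 0, if (3 : ZMod 11) + i ∈ D then 1 else 0, if (4 : ZMod 11) + i ∈ D then 1 else 0, if (5 : ZMod 11) + i ∈ D then 1 else 0, if (6 : ZMod 11) + i ∈ D then 1 else 0, if (7 : ZMod 11) + i ∈ D then 1 else 0, if (8 : ZMod 11) + i ∈ D then 1 else 0, if (9 : ZMod 11) + i ∈ D then 1 else 0, if (10 : ZMod 11) + i ∈ D then 1 else 0, by rw [coe_gen]; exact gens i⟩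

theorem coe_uu : ⇑uu.coeff = gfun 1 := by
  have h := coe_gen 1
  rwa [map_one, one_mul] at h

theorem wt_uu : wt uu = 6 := by
  rw [wt_glue, coe_uu]
  decide

theorem uu_ne : uu ≠ 0 := by
  intro h
  have := wt_uu
  rw [h] at this
  simp [wt] at this

theorem sq_zero : uu ^ 2 = 0 := by
  have expand : ∀ v : MonoidAlgebra (ZMod 2) (DihedralGroup 11),
      uu * v = v + ∑ j ∈ D, MonoidAlgebra.of (ZMod 2) (DihedralGroup 11) (DihedralGroup.sr j) * v := by
    intro v
    rw [uu, add_mul, one_mul, Finset.sum_mul]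
  apply MonoidAlgebra.coeff_injective
  apply DFunLike.coe_injective (F := DihedralGroup 11 →₀ ZMod 2)
  beta_reduce
  rw [sq, expand uu, MonoidAlgebra.coeff_add, Finsupp.coe_add, MonoidAlgebra.coeff_sum, Finsupp.coe_finset_sum, coe_uu]
  have hz : gfun 1 + ∑ j ∈ D, gfun (DihedralGroup.sr j) = 0 := by decide
  calc gfun 1 + ∑ j ∈ D, ⇑(MonoidAlgebra.of (ZMod 2) (DihedralGroup 11) (DihedralGroup.sr j) * uu).coeff
      = gfun 1 + ∑ j ∈ D, gfun (DihedralGroup.sr j) := by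
        congr 1
        exact Finset.sum_congr rfl fun j _ => coe_gen (DihedralGroup.sr j)
    _ = 0 := hz
    _ = ⇑(0 : MonoidAlgebra (ZMod 2) (DihedralGroup 11)).coeff := by rw [MonoidAlgebra.coeff_zero, Finsupp.coe_zero]

end Aux


theorem dihedral_selfdual_code_11 : uu ^ 2 = 0 ∧ minDist uu = 6 := by
  refine ⟨sq_zero, ?_⟩
  have hmem : uu ∈ codeGen uu :=
    Submodule.subset_span ⟨1, by show MonoidAlgebra.of (ZMod 2) (DihedralGroup 11) 1 * uu = uu; rw [map_one, one_mul]⟩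
  have h6 : (6 : ℕ) ∈ {n | ∃ x ∈ codeGen uu, x ≠ 0 ∧ wt x = n} := ⟨uu, hmem, uu_ne, wt_uu⟩
  have hlb : ∀ n ∈ {n | ∃ x ∈ codeGen uu, x ≠ 0 ∧ wt x = n}, 6 ≤ n := by
    rintro n ⟨x, hx, hx0, rfl⟩
    obtain ⟨c0, c1, c2, c3, c4, c5, c6, c7, c8, c9, c10, hc⟩ := code_le_W hx
    rcases key c0 c1 c2 c3 c4 c5 c6 c7 c8 c9 c10 with h0 | h6'
    · have hwt : wt x = 0 := by rw [wt_glue, hc]; exact h0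
      exact absurd (MonoidAlgebra.coeff_eq_zero.mp (Finsupp.card_support_eq_zero.mp hwt)) hx0
    · rw [wt_glue, hc]
      exact h6'
  unfold minDist
  exact le_antisymm (Nat.sInf_le h6) (hlb _ (Nat.sInf_mem ⟨6, h6⟩))

end
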